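/- For complex numbers A₁, A₂, C₁, C₂ (playing the roles A₁ = A_{34}, A₂ = A_{45}, C₁ = C_{34}, C₂ = C_{45}), the quantity Φ₁' := 8|A₁|² + 8|A₂|² + 8|C₁|² + 8|C₂|² + 4 Re(A₁ Ā₂ + C₁ C̄₂) + 2 Re(A₁ C̄₂ + C₁ Ā₂) - 2|A₁ + C₁|² - 2|A₂ + C₂|² satisfies Φ₁' ≥ |A₁|² + |A₂|² + |C₁|² + |C₂|²; in particular Φ₁' ≥ 0. -/

import Mathlib

/-- For `A₁, A₂, C₁, C₂ ∈ ℂ`, the quantity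
`Φ₁' = 8|A₁|² + 8|A₂|² + 8|C₁|² + 8|C₂|² + 4 Re(A₁ Ā₂ + C₁ C̄₂)
  + 2 Re(A₁ C̄₂ + C₁ Ā₂) - 2|A₁+C₁|² - 2|A₂+C₂|²`
satisfies `Φ₁' ≥ |A₁|² + |A₂|² + |C₁|² + |C₂|²`; in particular `Φ₁' ≥ 0`. -/
theorem stmt9 (A₁ A₂ C₁ C₂ : ℂ) :
    ‖A₁‖ ^ 2 + ‖A₂‖ ^ 2 + ‖C₁‖ ^ 2 + ‖C₂‖ ^ 2 ≤
      8 * ‖A₁‖ ^ 2 + 8 * ‖A₂‖ ^ 2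
        + 8 * ‖C₁‖ ^ 2 + 8 * ‖C₂‖ ^ 2
        + 4 * (A₁ * (starRingEnd ℂ) A₂ + C₁ * (starRingEnd ℂ) C₂).re
        + 2 * (A₁ * (starRingEnd ℂ) C₂ + C₁ * (starRingEnd ℂ) A₂).re
        - 2 * ‖A₁ + C₁‖ ^ 2 - 2 * ‖A₂ + C₂‖ ^ 2 ∧
    0 ≤ 8 * ‖A₁‖ ^ 2 + 8 * ‖A₂‖ ^ 2
        + 8 * ‖C₁‖ ^ 2 + 8 * ‖C₂‖ ^ 2
        + 4 * (A₁ * (starRingEnd ℂ) A₂ + C₁ * (starRingEnd ℂ) C₂).re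
        + 2 * (A₁ * (starRingEnd ℂ) C₂ + C₁ * (starRingEnd ℂ) A₂).re
        - 2 * ‖A₁ + C₁‖ ^ 2 - 2 * ‖A₂ + C₂‖ ^ 2 := by
  have h : ∀ x : ℂ, ‖x‖ ^ 2 = x.re ^ 2 + x.im ^ 2 := by
    intro x
    rw [Complex.sq_norm, Complex.normSq_apply]; ring
  simp only [h, Complex.add_re, Complex.add_im, Complex.mul_re, Complex.mul_im,
    Complex.conj_re, Complex.conj_im]
  constructor <;> nlinarith [sq_nonneg (A₁.re + A₂.re + C₁.re + C₂.re),
    sq_nonneg (A₁.im + A₂.im + C₁.im + C₂.im),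
    sq_nonneg (A₁.re - C₁.re), sq_nonneg (A₂.re - C₂.re),
    sq_nonneg (A₁.im - C₁.im), sq_nonneg (A₂.im - C₂.im),
    sq_nonneg (A₁.re + A₂.re), sq_nonneg (C₁.re + C₂.re),
    sq_nonneg (A₁.im + A₂.im), sq_nonneg (C₁.im + C₂.im)]
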